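/- For every θ > 0, one has 1 − 4/(e^{4θ} + 3) > tanh²(θ); equivalently, (e^{4θ} − 1)/(e^{4θ} + 3) > tanh²(θ). Hence in the weak supervision Ising ensemble the symmetric KL divergence 2θ(1 − 4(e^{4θ}+3)^{−1} − tanh²(θ)) between distinct graphs G^{st} and G^{uv} is strictly positive, but strictly smaller than the supervised-case divergence 2θ tanh(θ) would suggest, since the latent variable Y correlates λ_s and λ_t even when the edge (λ_s, λ_t) is absent. -/

import Mathlib

/-- For every `θ > 0`, `1 − 4/(e^{4θ}+3) > tanh²(θ)` (equivalently
`(e^{4θ}−1)/(e^{4θ}+3) > tanh²(θ)`); hence the symmetric KL divergence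
`2θ(1 − 4(e^{4θ}+3)⁻¹ − tanh²(θ))` between distinct graphs in the weak supervision Ising
ensemble is strictly positive, but strictly smaller than the supervised-case divergence
`2θ tanh(θ)`. -/
theorem ising_divergence_positive_but_smaller (θ : ℝ) (hθ : 0 < θ) :
    1 - 4 / (Real.exp (4 * θ) + 3) > Real.tanh θ ^ 2 ∧
    (Real.exp (4 * θ) - 1) / (Real.exp (4 * θ) + 3) > Real.tanh θ ^ 2 ∧
    0 < 2 * θ * (1 - 4 * (Real.exp (4 * θ) + 3)⁻¹ - Real.tanh θ ^ 2) ∧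
    2 * θ * (1 - 4 * (Real.exp (4 * θ) + 3)⁻¹ - Real.tanh θ ^ 2) < 2 * θ * Real.tanh θ := by
  set y := Real.exp θ with hy'
  have hy0 : 0 < y := Real.exp_pos θ
  have hy : 1 < y := by
    calc (1:ℝ) = Real.exp 0 := Real.exp_zero.symm
    _ < y := Real.exp_lt_exp.mpr hθ
  have h4 : Real.exp (4 * θ) = y ^ 4 := by
    rw [hy', ← Real.exp_nat_mul]; norm_num
  have hne : Real.exp (-θ) = y⁻¹ := by rw [Real.exp_neg]
  have ht : Real.tanh θ = (y ^ 2 - 1) / (y ^ 2 + 1) := by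
    rw [Real.tanh_eq_sinh_div_cosh, Real.sinh_eq, Real.cosh_eq, hne, ← hy']
    field_simp
  have hd1 : (0:ℝ) < y ^ 4 + 3 := by positivity
  have hd2 : (0:ℝ) < (y ^ 2 + 1) ^ 2 := by positivity
  have key : (y ^ 4 - 1) / (y ^ 4 + 3) > ((y ^ 2 - 1) / (y ^ 2 + 1)) ^ 2 := by
    rw [gt_iff_lt, div_pow, div_lt_div_iff₀ hd2 hd1]
    nlinarith [sq_nonneg (y - 1), sq_nonneg y, sq_nonneg (y ^ 2 - 1),
      mul_pos (mul_pos (sub_pos.mpr hy) hy0) hy0, sq_nonneg (y + 1)]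
  have key2 : (y ^ 4 - 1) / (y ^ 4 + 3) - ((y ^ 2 - 1) / (y ^ 2 + 1)) ^ 2
      < (y ^ 2 - 1) / (y ^ 2 + 1) := by
    rw [div_pow, div_sub_div _ _ (ne_of_gt hd1) (ne_of_gt hd2),
      div_lt_div_iff₀ (by positivity) (by positivity)]
    have h1 : (0:ℝ) < y ^ 2 - 1 := by nlinarith
    nlinarith [mul_pos (show (0:ℝ) < y ^ 2 + 1 by positivity) (pow_pos h1 4)]
  have heq : 1 - 4 / (y ^ 4 + 3) = (y ^ 4 - 1) / (y ^ 4 + 3) := by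
    field_simp
    ring
  rw [h4, ht, heq]
  refine ⟨key, key, ?_, ?_⟩
  · rw [← div_eq_mul_inv, heq]
    have := sub_pos.mpr key
    positivity
  · rw [← div_eq_mul_inv, heq]
    have h2θ : 0 < 2 * θ := by linarith
    exact (mul_lt_mul_iff_right₀ h2θ).mpr key2
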